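/- arXiv:0812.0201 — 2 statements merged into one kernel-verified Lean document; each statement's English description precedes it below -/
import Mathlib

section
/- The Jacobi identity for theta functions holds: θ'(0,τ) = π·θ₁(0,τ)·θ₂(0,τ)·θ₃(0,τ), where θ'(0,τ) denotes the derivative of θ(v,τ) with respect to v evaluated at v = 0. -/
open Complex

/-- `qp τ s = e^{2πiτs}`, so that `qp τ s = q^s` with `q = e^{2πiτ}`. -/
noncomputable def qp (τ s : ℂ) : ℂ := Complex.exp (2 * (Real.pi : ℂ) * Complex.I * τ * s)

/-- Jacobi theta function θ(v,τ). -/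
noncomputable def jTheta (v τ : ℂ) : ℂ :=
  2 * qp τ (1/8) * Complex.sin ((Real.pi : ℂ) * v) *
    ∏' j : ℕ, ((1 - qp τ (j + 1)) *
      (1 - Complex.exp (2 * (Real.pi : ℂ) * Complex.I * v) * qp τ (j + 1)) *
      (1 - Complex.exp (-(2 * (Real.pi : ℂ) * Complex.I * v)) * qp τ (j + 1)))

/-- Jacobi theta function θ₁(v,τ). -/
noncomputable def jTheta1 (v τ : ℂ) : ℂ :=
  2 * qp τ (1/8) * Complex.cos ((Real.pi : ℂ) * v) *
    ∏' j : ℕ, ((1 - qp τ (j + 1)) *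
      (1 + Complex.exp (2 * (Real.pi : ℂ) * Complex.I * v) * qp τ (j + 1)) *
      (1 + Complex.exp (-(2 * (Real.pi : ℂ) * Complex.I * v)) * qp τ (j + 1)))

/-- Jacobi theta function θ₂(v,τ). -/
noncomputable def jTheta2 (v τ : ℂ) : ℂ :=
  ∏' j : ℕ, ((1 - qp τ (j + 1)) *
    (1 - Complex.exp (2 * (Real.pi : ℂ) * Complex.I * v) * qp τ ((j : ℂ) + 1/2)) *
    (1 - Complex.exp (-(2 * (Real.pi : ℂ) * Complex.I * v)) * qp τ ((j : ℂ) + 1/2)))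

/-- Jacobi theta function θ₃(v,τ). -/
noncomputable def jTheta3 (v τ : ℂ) : ℂ :=
  ∏' j : ℕ, ((1 - qp τ (j + 1)) *
    (1 + Complex.exp (2 * (Real.pi : ℂ) * Complex.I * v) * qp τ ((j : ℂ) + 1/2)) *
    (1 + Complex.exp (-(2 * (Real.pi : ℂ) * Complex.I * v)) * qp τ ((j : ℂ) + 1/2)))


open Filter Topology


private lemma jne {z : ℂ} (hz : ‖z‖ < 1) : (1 : ℂ) + z ≠ 0 := by
  intro h
  have h2 : (1:ℂ) = -z := by linear_combination h
  have : ‖(1:ℂ)‖ = ‖z‖ := by rw [h2, norm_neg]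
  rw [norm_one] at this; rw [← this] at hz; exact lt_irrefl _ hz

private lemma jslit {z : ℂ} (hz : ‖z‖ < 1) : 1 + z ∈ Complex.slitPlane := by
  rw [Complex.mem_slitPlane_iff]
  left
  simp only [Complex.add_re, Complex.one_re]
  have : |z.re| ≤ ‖z‖ := Complex.abs_re_le_norm z
  cases abs_le.mp this with
  | intro h1 h2 => linarith

private lemma jlog_le {a : ℝ} (ha : a < 1) {z : ℂ} (hz : ‖z‖ ≤ a) :
    ‖Complex.log (1 + z)‖ ≤ (a * (1 - a)⁻¹ / 2 + 1) * ‖z‖ := by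
  have h1 : ‖z‖ < 1 := hz.trans_lt ha
  have h0 : (0:ℝ) ≤ ‖z‖ := norm_nonneg z
  have ha0 : (0:ℝ) ≤ a := h0.trans hz
  have h3 : (1 - ‖z‖)⁻¹ ≤ (1 - a)⁻¹ := by
    apply inv_anti₀ (by linarith) (by linarith)
  have h5 : (0:ℝ) ≤ (1 - ‖z‖)⁻¹ := by
    apply le_of_lt (inv_pos.mpr (by linarith))
  have key : ‖z‖ * (1 - ‖z‖)⁻¹ ≤ a * (1 - a)⁻¹ := mul_le_mul hz h3 h5 ha0
  calc ‖Complex.log (1 + z)‖ ≤ ‖z‖ ^ 2 * (1 - ‖z‖)⁻¹ / 2 + ‖z‖ :=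
        Complex.norm_log_one_add_le h1
    _ ≤ (a * (1 - a)⁻¹ / 2 + 1) * ‖z‖ := by
        nlinarith [mul_le_mul_of_nonneg_left key h0]

private lemma jsummable {b c : ℂ} (hb : ‖b‖ < 1) (hc : ‖c‖ < 1) :
    Summable (fun j : ℕ => Complex.log (1 + b * c ^ j)) := by
  have hb0 : (0:ℝ) ≤ ‖b‖ := norm_nonneg b
  apply Summable.of_norm_bounded
    (g := fun j => (‖b‖ * (1 - ‖b‖)⁻¹ / 2 + 1) * (‖b‖ * ‖c‖ ^ j))
  · exact ((summable_geometric_of_lt_one (norm_nonneg c) hc).mul_left ‖b‖).mul_left _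
  · intro j
    have hle : ‖b * c ^ j‖ ≤ ‖b‖ * ‖c‖ ^ j := by
      rw [norm_mul, norm_pow]
    have hle2 : ‖b * c ^ j‖ ≤ ‖b‖ := by
      rw [norm_mul, norm_pow]
      calc ‖b‖ * ‖c‖ ^ j ≤ ‖b‖ * 1 := by
            apply mul_le_mul_of_nonneg_left _ hb0
            exact pow_le_one₀ (norm_nonneg c) hc.le
        _ = ‖b‖ := mul_one _
    calc ‖Complex.log (1 + b * c ^ j)‖ ≤ (‖b‖ * (1 - ‖b‖)⁻¹ / 2 + 1) * ‖b * c ^ j‖ :=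
          jlog_le hb hle2
      _ ≤ (‖b‖ * (1 - ‖b‖)⁻¹ / 2 + 1) * (‖b‖ * ‖c‖ ^ j) := by
          apply mul_le_mul_of_nonneg_left hle
          have : (0:ℝ) ≤ ‖b‖ * (1 - ‖b‖)⁻¹ := by
            apply mul_nonneg hb0 (le_of_lt (inv_pos.mpr (by linarith)))
          linarith

private lemma jterm_norm {b c : ℂ} (hb : ‖b‖ < 1) (hc : ‖c‖ < 1) (j : ℕ) :
    ‖b * c ^ j‖ < 1 := by
  rw [norm_mul, norm_pow]
  calc ‖b‖ * ‖c‖ ^ j ≤ ‖b‖ * 1 :=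
        mul_le_mul_of_nonneg_left (pow_le_one₀ (norm_nonneg c) hc.le) (norm_nonneg b)
    _ = ‖b‖ := mul_one _
    _ < 1 := hb

private lemma jhasProd {b c : ℂ} (hb : ‖b‖ < 1) (hc : ‖c‖ < 1) :
    HasProd (fun j : ℕ => 1 + b * c ^ j)
      (Complex.exp (∑' j : ℕ, Complex.log (1 + b * c ^ j))) := by
  have h := (jsummable hb hc).hasSum.cexp
  have h2 : (cexp ∘ fun j : ℕ => Complex.log (1 + b * c ^ j)) = fun j : ℕ => 1 + b * c ^ j :=
    funext fun j => Complex.exp_log (jne (jterm_norm hb hc j))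
  rwa [h2] at h

private lemma jmult {b c : ℂ} (hb : ‖b‖ < 1) (hc : ‖c‖ < 1) :
    Multipliable (fun j : ℕ => 1 + b * c ^ j) := ⟨_, jhasProd hb hc⟩

private lemma jtprod_ne {b c : ℂ} (hb : ‖b‖ < 1) (hc : ‖c‖ < 1) :
    (∏' j : ℕ, (1 + b * c ^ j)) ≠ 0 := by
  rw [(jhasProd hb hc).tprod_eq]; exact Complex.exp_ne_zero _
private lemma jeuler {q : ℂ} (hq : ‖q‖ < 1) :
    (∏' j : ℕ, (1 + q * q ^ j)) * (∏' j : ℕ, (1 + (-q) * (q ^ 2) ^ j)) = 1 := by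
  have hnq : ‖-q‖ < 1 := by rwa [norm_neg]
  have hq2 : ‖q ^ 2‖ < 1 := by
    rw [norm_pow]
    calc ‖q‖ ^ 2 ≤ ‖q‖ * 1 := by rw [pow_two]; exact
          mul_le_mul_of_nonneg_left hq.le (norm_nonneg q)
      _ < 1 := by rwa [mul_one]
  have hP := (jmult hq hq).hasProd.tendsto_prod_nat
  have hQ := (jmult hnq hq2).hasProd.tendsto_prod_nat
  have hR := (jmult hnq hq).hasProd.tendsto_prod_nat
  have key : ∀ N : ℕ,
      (∏ j ∈ Finset.range N, (1 + q * q ^ j)) *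
      (∏ j ∈ Finset.range N, (1 + (-q) * (q ^ 2) ^ j)) *
      (∏ j ∈ Finset.range N, (1 + (-q) * q ^ j)) =
      ∏ j ∈ Finset.range (2 * N), (1 + (-q) * q ^ j) := by
    intro N
    induction N with
    | zero => simp
    | succ n ih =>
      rw [Finset.prod_range_succ, Finset.prod_range_succ, Finset.prod_range_succ,
        show 2 * (n + 1) = (2 * n) + 1 + 1 by ring, Finset.prod_range_succ,
        Finset.prod_range_succ, ← ih]
      have e1 : ((q:ℂ) ^ 2) ^ n = q ^ n * q ^ n := by
        rw [← pow_mul, two_mul, pow_add]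
      have e2 : (q:ℂ) ^ (2 * n) = q ^ n * q ^ n := by
        rw [two_mul, pow_add]
      have e3 : (q:ℂ) ^ (2 * n + 1) = q ^ n * q ^ n * q := by
        rw [pow_add, e2, pow_one]
      rw [e1, e2, e3]; ring
  have h2N : Tendsto (fun N : ℕ => 2 * N) atTop atTop :=
    Filter.tendsto_atTop_atTop.mpr fun b => ⟨b, fun a ha => by omega⟩
  have hL := (hP.mul hQ).mul hR
  rw [show (fun N : ℕ => (∏ j ∈ Finset.range N, (1 + q * q ^ j)) *
      (∏ j ∈ Finset.range N, (1 + (-q) * (q ^ 2) ^ j)) *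
      (∏ j ∈ Finset.range N, (1 + (-q) * q ^ j))) =
      fun N : ℕ => ∏ j ∈ Finset.range (2 * N), (1 + (-q) * q ^ j) from funext key] at hL
  have hR2 : Tendsto (fun N : ℕ => ∏ j ∈ Finset.range (2 * N), (1 + (-q) * q ^ j)) atTop
      (𝓝 (∏' j : ℕ, (1 + (-q) * q ^ j))) := hR.comp h2N
  have heq := tendsto_nhds_unique hL hR2
  have hne := jtprod_ne hnq hq
  have := mul_right_cancel₀ hne (heq.trans (one_mul _).symm)
  exact this

private lemma jcontinuousAt {c w₀ : ℂ} (hc : ‖c‖ < 1) (hw : ‖w₀ * c‖ < 1) :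
    ContinuousAt (fun w : ℂ => ∏' j : ℕ, (1 + w * c * c ^ j)) w₀ := by
  set a : ℝ := (1 + ‖w₀ * c‖) / 2 with ha_def
  have ha0 : 0 ≤ a := by positivity
  have ha1 : a < 1 := by rw [ha_def]; linarith
  have haw : ‖w₀ * c‖ < a := by rw [ha_def]; linarith
  set U : Set ℂ := {w : ℂ | ‖w * c‖ < a} with hU_def
  have hUopen : IsOpen U := isOpen_lt ((continuous_id.mul continuous_const).norm)
    continuous_const
  have hU1 : w₀ ∈ U := haw
  have hbd : ∀ (w : ℂ), w ∈ U → ∀ j : ℕ, ‖w * c * c ^ j‖ ≤ a * ‖c‖ ^ j := by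
    intro w hw j
    rw [norm_mul, norm_pow]
    exact mul_le_mul_of_nonneg_right (le_of_lt hw) (by positivity)
  have hbd2 : ∀ (w : ℂ), w ∈ U → ∀ j : ℕ, ‖w * c * c ^ j‖ ≤ a := by
    intro w hw j
    calc ‖w * c * c ^ j‖ ≤ a * ‖c‖ ^ j := hbd w hw j
      _ ≤ a * 1 := mul_le_mul_of_nonneg_left (pow_le_one₀ (norm_nonneg c) hc.le) ha0
      _ = a := mul_one _
  have hS : ContinuousOn (fun w : ℂ => ∑' j : ℕ, Complex.log (1 + w * c * c ^ j)) U := by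
    apply continuousOn_tsum (u := fun j => (a * (1 - a)⁻¹ / 2 + 1) * (a * ‖c‖ ^ j))
    · intro j
      intro w hwU
      apply ContinuousAt.continuousWithinAt
      have hlt : ‖w * c * c ^ j‖ < 1 := lt_of_le_of_lt (hbd2 w hwU j) ha1
      exact ContinuousAt.clog (by fun_prop) (jslit hlt)
    · exact ((summable_geometric_of_lt_one (norm_nonneg c) hc).mul_left a).mul_left _
    · intro j w hwU
      calc ‖Complex.log (1 + w * c * c ^ j)‖
          ≤ (a * (1 - a)⁻¹ / 2 + 1) * ‖w * c * c ^ j‖ := jlog_le ha1 (hbd2 w hwU j)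
        _ ≤ (a * (1 - a)⁻¹ / 2 + 1) * (a * ‖c‖ ^ j) := by
            apply mul_le_mul_of_nonneg_left (hbd w hwU j)
            have : (0:ℝ) ≤ a * (1 - a)⁻¹ :=
              mul_nonneg ha0 (le_of_lt (inv_pos.mpr (by linarith)))
            linarith
  have hEq : Set.EqOn (fun w : ℂ => ∏' j : ℕ, (1 + w * c * c ^ j))
      (fun w : ℂ => Complex.exp (∑' j : ℕ, Complex.log (1 + w * c * c ^ j))) U := by
    intro w hwU
    have hb : ‖w * c‖ < 1 := lt_of_lt_of_le hwU ha1.le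
    exact (jhasProd hb hc).tprod_eq
  exact ((Complex.continuous_exp.comp_continuousOn hS).congr hEq).continuousAt
    (hUopen.mem_nhds hU1)

private lemma qp_nat (τ : ℂ) (j : ℕ) :
    qp τ ((j : ℂ) + 1) = qp τ 1 * (qp τ 1) ^ j := by
  unfold qp
  rw [mul_one]
  rw [← Complex.exp_nat_mul]
  rw [← Complex.exp_add]
  congr 1
  ring

private lemma qp_half (τ : ℂ) (j : ℕ) :
    qp τ ((j : ℂ) + 1/2) = qp τ (1/2) * ((qp τ (1/2)) ^ 2) ^ j := by
  unfold qp
  rw [← pow_mul, ← Complex.exp_nat_mul, ← Complex.exp_add]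
  congr 1
  push_cast [Nat.cast_mul]
  ring

private lemma qp_one_eq_sq (τ : ℂ) : qp τ 1 = (qp τ (1/2)) ^ 2 := by
  unfold qp
  rw [sq, ← Complex.exp_add]
  congr 1
  ring

private lemma qp_norm (τ : ℂ) (s : ℝ) : ‖qp τ (s : ℂ)‖ = Real.exp (-(2 * Real.pi * τ.im * s)) := by
  unfold qp
  rw [Complex.norm_exp]
  congr 1
  simp [Complex.mul_re, Complex.mul_im]

private lemma qp_norm_lt (τ : ℂ) (hτ : 0 < τ.im) {s : ℝ} (hs : 0 < s) :
    ‖qp τ (s : ℂ)‖ < 1 := by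
  rw [qp_norm]
  apply Real.exp_lt_one_iff.mpr
  have := Real.pi_pos
  have : 0 < 2 * Real.pi * τ.im * s := by positivity
  linarith

private lemma jsin_deriv {g : ℂ → ℂ} (hg : ContinuousAt g 0) :
    HasDerivAt (fun v : ℂ => Complex.sin ((Real.pi : ℂ) * v) * g v) ((Real.pi : ℂ) * g 0) 0 := by
  rw [hasDerivAt_iff_tendsto_slope]
  have hsin : HasDerivAt (fun v : ℂ => Complex.sin ((Real.pi : ℂ) * v)) ((Real.pi : ℂ)) 0 := by
    have h1 : HasDerivAt (fun v : ℂ => (Real.pi : ℂ) * v) ((Real.pi : ℂ)) 0 := by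
      simpa using (hasDerivAt_id (0:ℂ)).const_mul ((Real.pi : ℂ))
    have := (Complex.hasDerivAt_sin ((Real.pi : ℂ) * 0)).comp 0 h1
    simpa [Function.comp_def] using this
  have hslope := hasDerivAt_iff_tendsto_slope.mp hsin
  have hgt : Filter.Tendsto g (𝓝[≠] (0:ℂ)) (𝓝 (g 0)) :=
    hg.tendsto.mono_left nhdsWithin_le_nhds
  have hmul := hslope.mul hgt
  apply hmul.congr'
  filter_upwards [self_mem_nhdsWithin] with v hv
  simp only [slope_def_field, mul_zero, Complex.sin_zero, sub_zero, zero_mul]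
  rw [div_mul_eq_mul_div]
private noncomputable def Wq (q w : ℂ) : ℂ := ∏' j : ℕ, (1 + w * q * q ^ j)

private lemma Wq_hasProd {q w : ℂ} (h : ‖w * q‖ < 1) (hq : ‖q‖ < 1) :
    HasProd (fun j : ℕ => 1 + w * q * q ^ j) (Wq q w) := by
  unfold Wq
  exact (jmult (b := w * q) h hq).hasProd

private lemma Wq_contAt {q w₀ : ℂ} (hq : ‖q‖ < 1) (h : ‖w₀ * q‖ < 1) :
    ContinuousAt (Wq q) w₀ := by
  have := jcontinuousAt hq h
  exact this
/-- Jacobi identity: θ'(0,τ) = π θ₁(0,τ) θ₂(0,τ) θ₃(0,τ). -/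
theorem jacobi_identity (τ : ℂ) (hτ : 0 < τ.im) :
    deriv (fun v => jTheta v τ) 0 =
      (Real.pi : ℂ) * jTheta1 0 τ * jTheta2 0 τ * jTheta3 0 τ := by
  have hq : ‖qp τ 1‖ < 1 := by
    have := qp_norm_lt τ hτ (s := 1) one_pos
    simpa using this
  have hr : ‖qp τ (1/2)‖ < 1 := by
    have := qp_norm_lt τ hτ (s := 1/2) (by norm_num)
    simpa using this
  have hnq : ‖-qp τ 1‖ < 1 := by rwa [norm_neg]
  have hnr : ‖-qp τ (1/2)‖ < 1 := by rwa [norm_neg]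
  have hr2 : ‖(qp τ (1/2)) ^ 2‖ < 1 := by
    rw [norm_pow]
    nlinarith [norm_nonneg (qp τ (1/2))]
  have hq_eq : qp τ 1 = (qp τ (1/2)) ^ 2 := qp_one_eq_sq τ
  set Pm := ∏' j : ℕ, (1 + (-qp τ 1) * (qp τ 1) ^ j) with hPm_def
  set Pp := ∏' j : ℕ, (1 + qp τ 1 * (qp τ 1) ^ j) with hPp_def
  set Qm := ∏' j : ℕ, (1 + (-qp τ (1/2)) * ((qp τ (1/2)) ^ 2) ^ j) with hQm_def
  set Qp := ∏' j : ℕ, (1 + qp τ (1/2) * ((qp τ (1/2)) ^ 2) ^ j) with hQp_def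
  -- values of θ₁, θ₂, θ₃ at 0
  have h1 : jTheta1 0 τ = 2 * qp τ (1/8) * (Pm * (Pp * Pp)) := by
    have Hs : HasProd (fun j : ℕ => (1 + (-qp τ 1) * (qp τ 1) ^ j) *
        ((1 + qp τ 1 * (qp τ 1) ^ j) * (1 + qp τ 1 * (qp τ 1) ^ j))) (Pm * (Pp * Pp)) :=
      (jmult hnq hq).hasProd.mul ((jmult hq hq).hasProd.mul (jmult hq hq).hasProd)
    unfold jTheta1
    simp only [mul_zero, Complex.cos_zero, neg_zero, Complex.exp_zero, one_mul, mul_one]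
    rw [tprod_congr (g := fun j : ℕ => (1 + (-qp τ 1) * (qp τ 1) ^ j) *
        ((1 + qp τ 1 * (qp τ 1) ^ j) * (1 + qp τ 1 * (qp τ 1) ^ j)))
      (fun j => by rw [qp_nat]; ring), Hs.tprod_eq]
  have h2 : jTheta2 0 τ = Pm * (Qm * Qm) := by
    have Hs : HasProd (fun j : ℕ => (1 + (-qp τ 1) * (qp τ 1) ^ j) *
        ((1 + (-qp τ (1/2)) * ((qp τ (1/2)) ^ 2) ^ j) *
         (1 + (-qp τ (1/2)) * ((qp τ (1/2)) ^ 2) ^ j))) (Pm * (Qm * Qm)) :=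
      (jmult hnq hq).hasProd.mul ((jmult hnr hr2).hasProd.mul (jmult hnr hr2).hasProd)
    unfold jTheta2
    simp only [mul_zero, neg_zero, Complex.exp_zero, one_mul]
    rw [tprod_congr (g := fun j : ℕ => (1 + (-qp τ 1) * (qp τ 1) ^ j) *
        ((1 + (-qp τ (1/2)) * ((qp τ (1/2)) ^ 2) ^ j) *
         (1 + (-qp τ (1/2)) * ((qp τ (1/2)) ^ 2) ^ j)))
      (fun j => by rw [qp_nat, qp_half]; ring), Hs.tprod_eq]
  have h3 : jTheta3 0 τ = Pm * (Qp * Qp) := by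
    have Hs : HasProd (fun j : ℕ => (1 + (-qp τ 1) * (qp τ 1) ^ j) *
        ((1 + qp τ (1/2) * ((qp τ (1/2)) ^ 2) ^ j) *
         (1 + qp τ (1/2) * ((qp τ (1/2)) ^ 2) ^ j))) (Pm * (Qp * Qp)) :=
      (jmult hnq hq).hasProd.mul ((jmult hr hr2).hasProd.mul (jmult hr hr2).hasProd)
    unfold jTheta3
    simp only [mul_zero, neg_zero, Complex.exp_zero, one_mul]
    rw [tprod_congr (g := fun j : ℕ => (1 + (-qp τ 1) * (qp τ 1) ^ j) *
        ((1 + qp τ (1/2) * ((qp τ (1/2)) ^ 2) ^ j) *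
         (1 + qp τ (1/2) * ((qp τ (1/2)) ^ 2) ^ j)))
      (fun j => by rw [qp_nat, qp_half]; ring), Hs.tprod_eq]
  -- the function g
  set g : ℂ → ℂ := fun v => 2 * qp τ (1/8) *
      (Pm * (Wq (qp τ 1) (-(Complex.exp (2 * (Real.pi : ℂ) * Complex.I * v))) *
             Wq (qp τ 1) (-(Complex.exp (-(2 * (Real.pi : ℂ) * Complex.I * v)))))) with hg_def
  -- eventual equality near 0
  have hev : (fun v => jTheta v τ) =ᶠ[𝓝 (0:ℂ)]
      (fun v => Complex.sin ((Real.pi : ℂ) * v) * g v) := by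
    have hc1 : Filter.Tendsto
        (fun v : ℂ => ‖-(Complex.exp (2 * (Real.pi : ℂ) * Complex.I * v)) * qp τ 1‖)
        (𝓝 0) (𝓝 ‖-(Complex.exp (2 * (Real.pi : ℂ) * Complex.I * (0:ℂ))) * qp τ 1‖) := by
      apply Filter.Tendsto.norm
      apply Filter.Tendsto.mul _ tendsto_const_nhds
      apply Filter.Tendsto.neg
      exact (Complex.continuous_exp.comp (by fun_prop)).tendsto 0
    have hc2 : Filter.Tendsto
        (fun v : ℂ => ‖-(Complex.exp (-(2 * (Real.pi : ℂ) * Complex.I * v))) * qp τ 1‖)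
        (𝓝 0) (𝓝 ‖-(Complex.exp (-(2 * (Real.pi : ℂ) * Complex.I * (0:ℂ)))) * qp τ 1‖) := by
      apply Filter.Tendsto.norm
      apply Filter.Tendsto.mul _ tendsto_const_nhds
      apply Filter.Tendsto.neg
      exact (Complex.continuous_exp.comp (by fun_prop)).tendsto 0
    have hv0 : ‖-(Complex.exp (2 * (Real.pi : ℂ) * Complex.I * (0:ℂ))) * qp τ 1‖ < 1 := by
      simpa using hq
    have hv0' : ‖-(Complex.exp (-(2 * (Real.pi : ℂ) * Complex.I * (0:ℂ)))) * qp τ 1‖ < 1 := by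
      simpa using hq
    filter_upwards [hc1.eventually_lt_const hv0, hc2.eventually_lt_const hv0'] with v hv1 hv2
    have Hs : HasProd (fun j : ℕ => (1 + (-qp τ 1) * (qp τ 1) ^ j) *
        ((1 + -(Complex.exp (2 * (Real.pi : ℂ) * Complex.I * v)) * qp τ 1 * (qp τ 1) ^ j) *
         (1 + -(Complex.exp (-(2 * (Real.pi : ℂ) * Complex.I * v))) * qp τ 1 * (qp τ 1) ^ j)))
        (Pm * (Wq (qp τ 1) (-(Complex.exp (2 * (Real.pi : ℂ) * Complex.I * v))) *
               Wq (qp τ 1) (-(Complex.exp (-(2 * (Real.pi : ℂ) * Complex.I * v)))))) :=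
      (jmult hnq hq).hasProd.mul ((Wq_hasProd hv1 hq).mul (Wq_hasProd hv2 hq))
    show jTheta v τ = _
    unfold jTheta
    rw [tprod_congr (g := fun j : ℕ => (1 + (-qp τ 1) * (qp τ 1) ^ j) *
        ((1 + -(Complex.exp (2 * (Real.pi : ℂ) * Complex.I * v)) * qp τ 1 * (qp τ 1) ^ j) *
         (1 + -(Complex.exp (-(2 * (Real.pi : ℂ) * Complex.I * v))) * qp τ 1 * (qp τ 1) ^ j)))
      (fun j => by rw [qp_nat]; ring), Hs.tprod_eq, hg_def]
    ring
  -- continuity of g at 0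
  have hw1 : ‖-(Complex.exp (2 * (Real.pi : ℂ) * Complex.I * (0:ℂ))) * qp τ 1‖ < 1 := by
    simpa using hq
  have hw2 : ‖-(Complex.exp (-(2 * (Real.pi : ℂ) * Complex.I * (0:ℂ)))) * qp τ 1‖ < 1 := by
    simpa using hq
  have hcontg : ContinuousAt g 0 := by
    rw [hg_def]
    apply ContinuousAt.mul continuousAt_const
    apply ContinuousAt.mul continuousAt_const
    apply ContinuousAt.mul
    · have hinner1 : ContinuousAt
          (fun v : ℂ => -(Complex.exp (2 * (Real.pi : ℂ) * Complex.I * v))) 0 := by fun_prop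
      exact ContinuousAt.comp (x := (0:ℂ)) (g := Wq (qp τ 1))
        (f := fun v : ℂ => -(Complex.exp (2 * (Real.pi : ℂ) * Complex.I * v)))
        (Wq_contAt hq hw1) hinner1
    · have hinner2 : ContinuousAt
          (fun v : ℂ => -(Complex.exp (-(2 * (Real.pi : ℂ) * Complex.I * v)))) 0 := by fun_prop
      exact ContinuousAt.comp (x := (0:ℂ)) (g := Wq (qp τ 1))
        (f := fun v : ℂ => -(Complex.exp (-(2 * (Real.pi : ℂ) * Complex.I * v))))
        (Wq_contAt hq hw2) hinner2
  have hWm : ∀ w : ℂ, w = -1 → Wq (qp τ 1) w = Pm := by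
    intro w hw
    subst hw
    unfold Wq
    exact tprod_congr fun j => by ring
  have hg0 : g 0 = 2 * qp τ (1/8) * (Pm * (Pm * Pm)) := by
    rw [hg_def]
    simp only [mul_zero, neg_zero, Complex.exp_zero]
    rw [hWm _ rfl]
  -- Euler identity part
  have hQQ : Qm * Qp = ∏' j : ℕ, (1 + (-qp τ 1) * ((qp τ 1) ^ 2) ^ j) := by
    have Hs : HasProd (fun j : ℕ => (1 + (-qp τ (1/2)) * ((qp τ (1/2)) ^ 2) ^ j) *
        (1 + qp τ (1/2) * ((qp τ (1/2)) ^ 2) ^ j)) (Qm * Qp) :=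
      (jmult hnr hr2).hasProd.mul (jmult hr hr2).hasProd
    rw [show (fun j : ℕ => (1 + (-qp τ (1/2)) * ((qp τ (1/2)) ^ 2) ^ j) *
        (1 + qp τ (1/2) * ((qp τ (1/2)) ^ 2) ^ j)) =
        (fun j : ℕ => (1 + (-qp τ 1) * ((qp τ 1) ^ 2) ^ j)) from
      funext fun j => by rw [hq_eq]; ring] at Hs
    exact Hs.tprod_eq.symm
  have heuler : Pp * (Qm * Qp) = 1 := by
    rw [hQQ]
    exact jeuler hq
  -- put everything together
  rw [hev.deriv_eq, (jsin_deriv hcontg).deriv, hg0, h1, h2, h3]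
  linear_combination (-(Real.pi : ℂ) * 2 * qp τ (1/8) * (Pm * Pm * Pm) *
    (Pp * (Qm * Qp) + 1)) * heuler
end

section
/- The group Γ₀(2) of matrices in SL₂(ℤ) with lower-left entry even is generated by T = [[1,1],[0,1]] and ST²ST, where S = [[0,-1],[1,0]]. -/
open ModularGroup

open Matrix Matrix.SpecialLinearGroup MatrixGroups in
private def gg : SL(2, ℤ) := ModularGroup.S * ModularGroup.T ^ 2 * ModularGroup.S * ModularGroup.T

section aux
open Matrix Matrix.SpecialLinearGroup MatrixGroups

private lemma coe_gg : (gg : Matrix (Fin 2) (Fin 2) ℤ) = !![-1,-1;2,1] := by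
  simp only [gg, coe_mul, coe_S, coe_T, pow_two]
  norm_num [Matrix.mul_fin_two]

private lemma coe_gg_sq : ((gg ^ 2 : SL(2,ℤ)) : Matrix (Fin 2) (Fin 2) ℤ) = !![-1,0;0,-1] := by
  simp only [pow_two, coe_mul, coe_gg]
  norm_num [Matrix.mul_fin_two]

private def LL : SL(2, ℤ) := ⟨!![1,0;2,1], by norm_num [Matrix.det_fin_two_of]⟩

private lemma coe_LL : (LL : Matrix (Fin 2) (Fin 2) ℤ) = !![1,0;2,1] := rfl

private lemma coe_LL_inv : ((LL⁻¹ : SL(2,ℤ)) : Matrix (Fin 2) (Fin 2) ℤ) = !![1,0;-2,1] := by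
  simp [coe_inv, coe_LL, Matrix.adjugate_fin_two]

private lemma LL_eq : LL = ModularGroup.T * gg := by
  apply Subtype.ext
  simp only [coe_mul, coe_T, coe_gg, coe_LL]
  norm_num [Matrix.mul_fin_two]

private lemma coe_LL_zpow (m : ℤ) : ((LL ^ m : SL(2,ℤ)) : Matrix (Fin 2) (Fin 2) ℤ) = !![1,0;2*m,1] := by
  induction m using Int.induction_on with
  | zero =>
    rw [zpow_zero, show ((1 : SL(2,ℤ)) : Matrix (Fin 2) (Fin 2) ℤ) = 1 from rfl,
      Matrix.one_fin_two]
    norm_num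
  | succ n h =>
    rw [_root_.zpow_add, zpow_one, coe_mul, h, coe_LL]
    norm_num [Matrix.mul_fin_two]
    ring_nf
  | pred n h =>
    rw [_root_.zpow_sub, zpow_one, coe_mul, h, coe_LL_inv]
    norm_num [Matrix.mul_fin_two]
    ring_nf

private abbrev Hgen : Subgroup SL(2, ℤ) :=
  Subgroup.closure {ModularGroup.T, ModularGroup.S * ModularGroup.T ^ 2 * ModularGroup.S * ModularGroup.T}

private lemma hT_mem : ModularGroup.T ∈ Hgen :=
  Subgroup.subset_closure (Set.mem_insert _ _)

private lemma hgg_mem : gg ∈ Hgen :=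
  Subgroup.subset_closure (Set.mem_insert_of_mem _ rfl)

private lemma hLL_mem : LL ∈ Hgen := by
  rw [LL_eq]; exact mul_mem hT_mem hgg_mem

private lemma base_case (A : SL(2, ℤ)) (hc : A 1 0 = 0) : A ∈ Hgen := by
  have hdet := A.2
  rw [Matrix.det_fin_two] at hdet
  rw [hc, mul_zero, sub_zero] at hdet
  rcases Int.mul_eq_one_iff_eq_one_or_neg_one.mp hdet with ⟨h1, h4⟩ | ⟨h1, h4⟩
  · have : A = ModularGroup.T ^ (A 0 1) := by
      apply Subtype.ext
      rw [coe_T_zpow, Matrix.eta_fin_two (A : Matrix (Fin 2) (Fin 2) ℤ), h1, hc, h4]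
      simp
    rw [this]; exact Subgroup.zpow_mem _ hT_mem _
  · have : A = gg ^ 2 * ModularGroup.T ^ (-(A 0 1)) := by
      apply Subtype.ext
      rw [coe_mul, coe_gg_sq, coe_T_zpow,
        Matrix.eta_fin_two (A : Matrix (Fin 2) (Fin 2) ℤ), h1, hc, h4]
      norm_num [Matrix.mul_fin_two]
    rw [this]
    exact mul_mem (pow_mem hgg_mem 2) (Subgroup.zpow_mem _ hT_mem _)

private lemma key : ∀ N : ℕ, ∀ A : SL(2, ℤ), (A 1 0).natAbs ≤ N → (2 : ℤ) ∣ A 1 0 → A ∈ Hgen := by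
  intro N
  induction N with
  | zero =>
    intro A hA _
    exact base_case A (by omega)
  | succ N ih =>
    intro A hA hdvd
    by_cases hc : A 1 0 = 0
    · exact base_case A hc
    · have hdet := A.2
      rw [Matrix.det_fin_two] at hdet
      -- a = A 0 0 is odd
      have ha2 : ¬ (2:ℤ) ∣ A 0 0 := by
        rintro ⟨j, hj⟩
        obtain ⟨k, hk⟩ := hdvd
        rw [hj, hk] at hdet
        have h2 : (2:ℤ) ∣ 1 := ⟨j * A 1 1 - A 0 1 * k, by linear_combination -hdet⟩
        norm_num at h2
      set n : ℤ := -(A 0 0 / A 1 0) with hn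
      set a' : ℤ := A 0 0 % A 1 0 with ha'
      have ha'eq : a' = A 0 0 + n * A 1 0 := by
        rw [ha', hn, Int.emod_def]; ring
      have ha'nonneg : 0 ≤ a' := Int.emod_nonneg _ hc
      have ha'lt : a' < (A 1 0).natAbs := by
        have := Int.emod_lt (A 0 0) hc
        exact this
      have ha'odd : ¬ (2:ℤ) ∣ a' := by
        rintro ⟨j, hj⟩
        obtain ⟨k, hk⟩ := hdvd
        apply ha2
        refine ⟨j - n * k, ?_⟩
        have h0 : A 0 0 = a' - n * A 1 0 := by rw [ha'eq]; ring
        rw [h0, hj, hk]; ring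
      have ha'pos : 0 < a' := by
        rcases ha'nonneg.lt_or_eq with h | h
        · exact h
        · exact absurd ⟨0, by omega⟩ ha'odd
      set q : ℤ := A 1 0 / (2 * a') with hq
      set r : ℤ := A 1 0 % (2 * a') with hr
      have hreq : r = A 1 0 - 2 * a' * q := by rw [hr, hq, Int.emod_def]
      have hrnonneg : 0 ≤ r := Int.emod_nonneg _ (by omega)
      have hrlt : r < 2 * a' := Int.emod_lt_of_pos _ (by omega)
      obtain ⟨m, hm1, hm2⟩ : ∃ m : ℤ, -a' ≤ A 1 0 + 2 * m * a' ∧ A 1 0 + 2 * m * a' ≤ a' := by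
        by_cases hcase : r ≤ a'
        · refine ⟨-q, ?_, ?_⟩ <;>
          · rw [show A 1 0 + 2 * -q * a' = r by rw [hreq]; ring]; omega
        · refine ⟨-(q+1), ?_, ?_⟩ <;>
          · rw [show A 1 0 + 2 * -(q+1) * a' = r - 2 * a' by rw [hreq]; ring]; omega
      set B : SL(2, ℤ) := LL ^ m * (ModularGroup.T ^ n * A) with hBdef
      have hBcoe : (B : Matrix (Fin 2) (Fin 2) ℤ) =
          !![A 0 0 + n * A 1 0, A 0 1 + n * A 1 1;
             2 * m * (A 0 0 + n * A 1 0) + A 1 0, 2 * m * (A 0 1 + n * A 1 1) + A 1 1] := by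
        rw [hBdef, coe_mul, coe_mul, coe_LL_zpow, coe_T_zpow,
          Matrix.eta_fin_two (A : Matrix (Fin 2) (Fin 2) ℤ)]
        norm_num [Matrix.mul_fin_two]
        try ring_nf
        try tauto
      have hB10 : B 1 0 = A 1 0 + 2 * m * a' := by
        have h := congrFun (congrFun hBcoe 1) 0
        norm_num at h
        rw [show B 1 0 = (B : Matrix (Fin 2) (Fin 2) ℤ) 1 0 from rfl, h, ha'eq]
        ring
      have hBmem : B ∈ Hgen := by
        apply ih B
        · rw [hB10]; omega
        · rw [hB10]
          obtain ⟨k, hk⟩ := hdvd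
          exact ⟨k + m * a', by rw [hk]; ring⟩
      have hAeq : A = (ModularGroup.T ^ n)⁻¹ * ((LL ^ m)⁻¹ * B) := by
        rw [hBdef]; group
      rw [hAeq]
      exact mul_mem (inv_mem (Subgroup.zpow_mem _ hT_mem _))
        (mul_mem (inv_mem (Subgroup.zpow_mem _ hLL_mem _)) hBmem)

end aux

/-- Γ₀(2) is generated by T and S·T²·S·T. -/
theorem Gamma0_two_generators :
    CongruenceSubgroup.Gamma0 2 =
      Subgroup.closure {ModularGroup.T, ModularGroup.S * ModularGroup.T ^ 2 * ModularGroup.S * ModularGroup.T} := by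
  apply le_antisymm
  · intro A hA
    have hdvd : (2 : ℤ) ∣ A 1 0 := by
      have h := CongruenceSubgroup.Gamma0_mem.mp hA
      exact_mod_cast (ZMod.intCast_zmod_eq_zero_iff_dvd _ 2).mp h
    exact key (A 1 0).natAbs A le_rfl hdvd
  · rw [Subgroup.closure_le]
    rintro x hx
    simp only [Set.mem_insert_iff, Set.mem_singleton_iff] at hx
    rcases hx with rfl | rfl
    · rw [SetLike.mem_coe, CongruenceSubgroup.Gamma0_mem]
      have h := congrFun (congrFun ModularGroup.coe_T 1) 0
      norm_num at h
      rw [show ModularGroup.T 1 0 = (0:ℤ) from by simp [ModularGroup.coe_T]]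
      norm_num
    · rw [SetLike.mem_coe, CongruenceSubgroup.Gamma0_mem]
      have h := congrFun (congrFun coe_gg 1) 0
      norm_num at h
      rw [show (ModularGroup.S * ModularGroup.T ^ 2 * ModularGroup.S * ModularGroup.T) 1 0
          = (gg : Matrix (Fin 2) (Fin 2) ℤ) 1 0 from rfl, h]
      exact (ZMod.intCast_zmod_eq_zero_iff_dvd 2 2).mpr ⟨1, rfl⟩
end
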